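/- For every integer s ≥ 1 and every integer t ≥ 1, the variable windmill C_3^t C_4^s is graceful when t ≡ 0 or 1 (mod 4), and near graceful when t ≡ 2 or 3 (mod 4). -/

import Mathlib

/-- The vertex type of a windmill whose vanes are cycles of lengths given by the list `L`:
`none` is the central vertex, and `some ⟨i, j⟩` is the `j`-th non-central vertex of the
`i`-th vane (a cycle of length `L.get i`, contributing `L.get i - 1` non-central vertices). -/
abbrev WindmillVertex (L : List ℕ) : Type :=
  Option (Σ i : Fin L.length, Fin (L.get i - 1))

/-- Base relation for the windmill graph: the central vertex is joined to the two ends of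
each vane's path, and consecutive vertices along each vane's path are joined. -/
def windmillRel (L : List ℕ) : WindmillVertex L → WindmillVertex L → Prop
  | none, some ⟨i, j⟩ => j.val = 0 ∨ j.val + 2 = L.get i
  | some ⟨i, j⟩, some ⟨i', j'⟩ => i.val = i'.val ∧ j'.val = j.val + 1
  | _, _ => False

/-- The windmill graph with vanes of cycle lengths given by `L`, all sharing one central
vertex.  `Windmill (List.replicate t n)` is `Cₙᵗ`. -/
def Windmill (L : List ℕ) : SimpleGraph (WindmillVertex L) :=
  SimpleGraph.fromRel (windmillRel L)

/-- The edge label induced by a vertex labelling `f`: the absolute difference of the labels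
of the two endpoints. -/
def edgeLabel {V : Type*} (f : V → ℕ) : Sym2 V → ℕ :=
  Sym2.lift ⟨fun u v => ((f u : ℤ) - (f v : ℤ)).natAbs,
    fun u v => by dsimp only; omega⟩

set_option maxHeartbeats 4000000

namespace WindGrace

abbrev WL (t s : ℕ) : List ℕ := List.replicate t 3 ++ List.replicate s 4

lemma WLlen (t s : ℕ) : (WL t s).length = t + s := by simp [WL]

lemma WLget (t s : ℕ) {i : ℕ} (h : i < (WL t s).length) :
    (WL t s).get ⟨i, h⟩ = if i < t then 3 else 4 := by
  simp only [WL, List.get_eq_getElem]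
  rcases Nat.lt_or_ge i t with hl | hr
  · rw [List.getElem_append_left (by simpa using hl)]
    simp [hl]
  · rw [List.getElem_append_right (by simpa using hr)]
    simp [Nat.not_lt.2 hr]

/-- number of "type-up" squares -/
def Wu (t s : ℕ) : ℕ := (2*s + 3 - t) / 6
attribute [reducible] Wu
def Wcadd (t : ℕ) : ℕ := 1 - (t % 4) / 2
/-- center-pair position of square `j` -/
def Wc (t s j : ℕ) : ℕ := if j < Wu t s then 2*j + Wcadd t else 2*s - 1 - (j - Wu t s)
/-- diff-pair position of square `j` -/
def Wd (t s j : ℕ) : ℕ := if j < Wu t s then 2*j + 1 - Wcadd t else 2*(Wu t s) + (j - Wu t s)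
/-- middle vertex label of square `j` -/
def Wb (t s j : ℕ) : ℕ := if j < Wu t s then 2*t + 8*j + 5 else 2*(Wc t s j) - 2*(Wd t s j)
def Wp (t s j : ℕ) : ℕ := t + 2 * Wc t s j + 1
def Wq (t s j : ℕ) : ℕ := t + 2 * Wc t s j + 2
def WX (t s : ℕ) : ℕ := t + 4*s

/-- vertex label of the `j`-th vertex of vane `i` -/
def lab (t s : ℕ) (A : ℕ → ℕ) (i j : ℕ) : ℕ :=
  if i < t then WX t s + A (i+1) + j * (i+1)
  else if j = 0 then Wp t s (i - t)
  else if j = 1 then Wb t s (i - t)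
  else Wq t s (i - t)

def ff (t s : ℕ) (A : ℕ → ℕ) : WindmillVertex (WL t s) → ℕ :=
  fun v => match v with
  | none => 0
  | some x => lab t s A x.1.val x.2.val

/-- the `e`-th edge label -/
def elb (t s : ℕ) (A : ℕ → ℕ) (e : ℕ) : ℕ :=
  if e < 3*t then
    (if e % 3 = 0 then WX t s + A (e/3 + 1)
     else if e % 3 = 1 then e/3 + 1
     else WX t s + A (e/3 + 1) + (e/3 + 1))
  else
    (if (e - 3*t) % 4 = 0 then Wp t s ((e - 3*t)/4)
     else if (e - 3*t) % 4 = 1 then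
        (if (e - 3*t)/4 < Wu t s then t + 2 * Wd t s ((e - 3*t)/4) + 2
         else t + 2 * Wd t s ((e - 3*t)/4) + 1)
     else if (e - 3*t) % 4 = 2 then
        (if (e - 3*t)/4 < Wu t s then t + 2 * Wd t s ((e - 3*t)/4) + 1
         else t + 2 * Wd t s ((e - 3*t)/4) + 2)
     else Wq t s ((e - 3*t)/4))

def mkV (t s i j : ℕ) : WindmillVertex (WL t s) :=
  if h : i < t + s ∧ (j < 2 ∨ (t ≤ i ∧ j < 3)) then
    some ⟨⟨i, by rw [WLlen]; exact h.1⟩, ⟨j, by rw [WLget]; split <;> omega⟩⟩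
  else none

def EE (t s : ℕ) (e : ℕ) : Sym2 (WindmillVertex (WL t s)) :=
  if e < 3*t then
    (if e % 3 = 0 then s(none, mkV t s (e/3) 0)
     else if e % 3 = 1 then s(mkV t s (e/3) 0, mkV t s (e/3) 1)
     else s(none, mkV t s (e/3) 1))
  else
    (if (e - 3*t) % 4 = 0 then s(none, mkV t s (t + (e - 3*t)/4) 0)
     else if (e - 3*t) % 4 = 1 then s(mkV t s (t + (e - 3*t)/4) 0, mkV t s (t + (e - 3*t)/4) 1)
     else if (e - 3*t) % 4 = 2 then s(mkV t s (t + (e - 3*t)/4) 1, mkV t s (t + (e - 3*t)/4) 2)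
     else s(none, mkV t s (t + (e - 3*t)/4) 2))


section
variable (t s hook : ℕ) (A : ℕ → ℕ)

def HA1 : Prop := ∀ i, 1 ≤ i → i ≤ t → 1 ≤ A i ∧ A i + i ≤ 2*t + hook
def HA2 : Prop := ∀ i, 1 ≤ i → i ≤ t → A i ≠ 2*t ∧ A i + i ≠ 2*t
def HA3 : Prop := ∀ i j e f, 1 ≤ i → i ≤ t → 1 ≤ j → j ≤ t → e ≤ 1 → f ≤ 1 →
    A i + e*i = A j + f*j → i = j ∧ e = f
variable {t s hook A}
lemma lab_bounds (hs : 1 ≤ s) (h1 : HA1 t hook A) :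
    ∀ i j, i < t + s → (j < 2 ∨ (t ≤ i ∧ j < 3)) →
      1 ≤ lab t s A i j ∧ lab t s A i j ≤ 3*t + 4*s + hook := by
  intro i j hi hj
  by_cases hit : i < t
  · have hA := h1 (i+1) (by omega) (by omega)
    have hj2 : j < 2 := by omega
    interval_cases j <;>
      simp only [lab, if_pos hit, WX] <;> omega
  · simp only [lab, if_neg hit, Wp, Wq, Wb, Wc, Wd, Wu, Wcadd, WX]
    split_ifs <;> omega

lemma lab_inj (hs : 1 ≤ s) (h1 : HA1 t hook A) (h3 : HA3 t A) :
    ∀ i j i' j', i < t + s → i' < t + s → (j < 2 ∨ (t ≤ i ∧ j < 3)) →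
      (j' < 2 ∨ (t ≤ i' ∧ j' < 3)) → lab t s A i j = lab t s A i' j' →
      i = i' ∧ j = j' := by
  intro i j i' j' hi hi' hj hj' heq
  by_cases hit : i < t <;> by_cases hit' : i' < t
  · -- tri-tri
    have hj2 : j < 2 := by omega
    have hj2' : j' < 2 := by omega
    simp only [lab, if_pos hit, if_pos hit'] at heq
    interval_cases j <;> interval_cases j' <;>
    · first
      | (have key := h3 (i+1) (i'+1) 0 0 (by omega) (by omega) (by omega) (by omega)
          (by omega) (by omega) (by omega); omega)
      | (have key := h3 (i+1) (i'+1) 0 1 (by omega) (by omega) (by omega) (by omega)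
          (by omega) (by omega) (by omega); omega)
      | (have key := h3 (i+1) (i'+1) 1 0 (by omega) (by omega) (by omega) (by omega)
          (by omega) (by omega) (by omega); omega)
      | (have key := h3 (i+1) (i'+1) 1 1 (by omega) (by omega) (by omega) (by omega)
          (by omega) (by omega) (by omega); omega)
  · -- tri-sq : contradiction
    have hA := h1 (i+1) (by omega) (by omega)
    have hj2 : j < 2 := by omega
    interval_cases j <;>
    · simp only [lab, if_pos hit, if_neg hit', Wp, Wq, Wb, Wc, Wd, Wu, Wcadd, WX] at heq
      split_ifs at heq <;> omega
  · have hA := h1 (i'+1) (by omega) (by omega)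
    have hj2' : j' < 2 := by omega
    interval_cases j' <;>
    · simp only [lab, if_neg hit, if_pos hit', Wp, Wq, Wb, Wc, Wd, Wu, Wcadd, WX] at heq
      split_ifs at heq <;> omega
  · -- sq-sq
    simp only [lab, if_neg hit, if_neg hit', Wp, Wq, Wb, Wc, Wd, Wu, Wcadd, WX] at heq
    split_ifs at heq <;> omega

lemma sq_range (ht : 1 ≤ t) (hs : 1 ≤ s) :
    ∀ e, 3*t ≤ e → e < 3*t + 4*s → t + 1 ≤ elb t s A e ∧ elb t s A e ≤ t + 4*s := by
  intro e he1 he2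
  simp only [elb, if_neg (by omega : ¬ e < 3*t), Wp, Wq, Wd, Wc, Wu, Wcadd]
  split_ifs <;> omega

lemma elb_bounds' (ht : 1 ≤ t) (hs : 1 ≤ s) (hhook : hook ≤ 1) (h1 : HA1 t hook A)
    (h2 : hook = 1 → HA2 t A) :
    ∀ e, e < 3*t + 4*s →
      1 ≤ elb t s A e ∧ (elb t s A e ≤ 3*t + 4*s - 1 ∨ elb t s A e = 3*t + 4*s + hook) := by
  intro e he
  rcases Nat.lt_or_ge e (3*t) with h | h
  · have hA := h1 (e/3+1) (by omega) (by omega)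
    have hA2 : hook = 1 → A (e/3+1) ≠ 2*t ∧ A (e/3+1) + (e/3+1) ≠ 2*t := fun hh =>
      h2 hh (e/3+1) (by omega) (by omega)
    have hA2' : hook = 1 → (A (e/3+1) ≠ 2*t ∧ A (e/3+1) + (e/3+1) ≠ 2*t) := hA2
    have hcase : hook = 0 ∨ (hook = 1 ∧ A (e/3+1) ≠ 2*t ∧ A (e/3+1) + (e/3+1) ≠ 2*t) := by
      rcases Nat.eq_zero_or_pos hook with h0 | h0
      · exact Or.inl h0
      · exact Or.inr ⟨by omega, hA2 (by omega)⟩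
    simp only [elb, if_pos h, WX]
    split_ifs <;> omega
  · have := sq_range (A := A) ht hs e h he
    omega

lemma elb_inj (ht : 1 ≤ t) (hs : 1 ≤ s) (h1 : HA1 t hook A) (h3 : HA3 t A) :
    ∀ e e', e < 3*t + 4*s → e' < 3*t + 4*s → elb t s A e = elb t s A e' → e = e' := by
  intro e e' he he' heq
  rcases Nat.lt_or_ge e (3*t) with h | h <;> rcases Nat.lt_or_ge e' (3*t) with h' | h'
  · -- tri-tri
    have hA := h1 (e/3+1) (by omega) (by omega)
    have hA' := h1 (e'/3+1) (by omega) (by omega)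
    simp only [elb, if_pos h, if_pos h', WX] at heq
    have hr : e % 3 < 3 := Nat.mod_lt _ (by norm_num)
    have hr' : e' % 3 < 3 := Nat.mod_lt _ (by norm_num)
    split_ifs at heq <;>
    first
      | omega
      | (have key := h3 (e/3+1) (e'/3+1) 0 0 (by omega) (by omega) (by omega) (by omega)
          (by omega) (by omega) (by omega); omega)
      | (have key := h3 (e/3+1) (e'/3+1) 0 1 (by omega) (by omega) (by omega) (by omega)
          (by omega) (by omega) (by omega); omega)
      | (have key := h3 (e/3+1) (e'/3+1) 1 0 (by omega) (by omega) (by omega) (by omega)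
          (by omega) (by omega) (by omega); omega)
      | (have key := h3 (e/3+1) (e'/3+1) 1 1 (by omega) (by omega) (by omega) (by omega)
          (by omega) (by omega) (by omega); omega)
  · have hA := h1 (e/3+1) (by omega) (by omega)
    have hsq := sq_range (A := A) ht hs e' h' he'
    rw [← heq] at hsq
    simp only [elb, if_pos h, WX] at hsq
    split_ifs at hsq <;> omega
  · have hA := h1 (e'/3+1) (by omega) (by omega)
    have hsq := sq_range (A := A) ht hs e h he
    rw [heq] at hsq
    simp only [elb, if_pos h', WX] at hsq
    split_ifs at hsq <;> omega
  · -- sq-sq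
    simp only [elb, if_neg (by omega : ¬ e < 3*t), if_neg (by omega : ¬ e' < 3*t),
      Wp, Wq, Wd, Wc, Wu, Wcadd] at heq
    split_ifs at heq <;> omega

lemma ff_none : ff t s A none = 0 := rfl

lemma ff_some (x : Σ i : Fin (WL t s).length, Fin ((WL t s).get i - 1)) :
    ff t s A (some x) = lab t s A x.1.val x.2.val := rfl

lemma WLget' (i : Fin (WL t s).length) : (WL t s).get i = if i.val < t then 3 else 4 :=
  WLget t s i.isLt

lemma vert_facts (x : Σ i : Fin (WL t s).length, Fin ((WL t s).get i - 1)) :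
    x.1.val < t + s ∧ (x.2.val < 2 ∨ (t ≤ x.1.val ∧ x.2.val < 3)) := by
  have h1 : x.1.val < t + s := Nat.lt_of_lt_of_le x.1.isLt (WLlen t s).le
  have h2 : x.2.val < (if x.1.val < t then 3 else 4) - 1 :=
    Nat.lt_of_lt_of_le x.2.isLt (Nat.sub_le_sub_right (WLget' x.1).le 1)
  refine ⟨h1, ?_⟩
  by_cases h : x.1.val < t
  · rw [if_pos h] at h2; omega
  · rw [if_neg h] at h2; omega

lemma ff_mkV {i j : ℕ} (hi : i < t + s) (hj : j < 2 ∨ (t ≤ i ∧ j < 3)) :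
    ff t s A (mkV t s i j) = lab t s A i j := by
  rw [mkV, dif_pos ⟨hi, hj⟩]
  rfl

lemma ff_inj (hs : 1 ≤ s) (h1 : HA1 t hook A) (h3 : HA3 t A) :
    Function.Injective (ff t s A) := by
  intro v w h
  match v, w with
  | none, none => rfl
  | none, some x =>
      exfalso
      obtain ⟨hx1, hx2⟩ := vert_facts x
      have := (lab_bounds hs h1 _ _ hx1 hx2).1
      rw [ff_none, ff_some] at h
      omega
  | some x, none =>
      exfalso
      obtain ⟨hx1, hx2⟩ := vert_facts x
      have := (lab_bounds hs h1 _ _ hx1 hx2).1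
      rw [ff_none, ff_some] at h
      omega
  | some x, some y =>
      obtain ⟨hx1, hx2⟩ := vert_facts x
      obtain ⟨hy1, hy2⟩ := vert_facts y
      rw [ff_some, ff_some] at h
      obtain ⟨hi, hj⟩ := lab_inj hs h1 h3 _ _ _ _ hx1 hy1 hx2 hy2 h
      obtain ⟨xi, xj⟩ := x
      obtain ⟨yi, yj⟩ := y
      simp only at hi hj
      have hI : xi = yi := Fin.ext hi
      subst hI
      have hJ : xj = yj := Fin.ext hj
      rw [hJ]

lemma ff_bound (hs : 1 ≤ s) (h1 : HA1 t hook A) :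
    ∀ v, ff t s A v ≤ 3*t + 4*s + hook := by
  intro v
  match v with
  | none => exact Nat.zero_le _
  | some x =>
      obtain ⟨hx1, hx2⟩ := vert_facts x
      exact (lab_bounds hs h1 _ _ hx1 hx2).2

lemma EE_label (ht : 1 ≤ t) (hs : 1 ≤ s) : ∀ e, e < 3*t + 4*s →
    edgeLabel (ff t s A) (EE t s e) = elb t s A e := by
  intro e he
  rcases Nat.lt_or_ge e (3*t) with h | h
  · have hd : e / 3 < t := by omega
    have hf0 : ff t s A (mkV t s (e/3) 0) = lab t s A (e/3) 0 :=
      ff_mkV (by omega) (Or.inl (by norm_num))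
    have hf1 : ff t s A (mkV t s (e/3) 1) = lab t s A (e/3) 1 :=
      ff_mkV (by omega) (Or.inl (by norm_num))
    rcases (by omega : e % 3 = 0 ∨ e % 3 = 1 ∨ e % 3 = 2) with h0 | h0 | h0 <;>
      simp only [EE, elb, if_pos h, h0] <;> norm_num <;>
      rw [edgeLabel, Sym2.lift_mk] <;>
      simp only [ff_none, hf0, hf1, lab, if_pos hd, WX] <;> omega
  · have hk : (e - 3*t) / 4 < s := by omega
    have hg0 : (t + (e - 3*t)/4 < t + s) := by omega
    have hnt : ¬ (t + (e - 3*t)/4 < t) := by omega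
    have hsub : t + (e - 3*t)/4 - t = (e - 3*t)/4 := by omega
    have hf0 : ff t s A (mkV t s (t + (e - 3*t)/4) 0) = Wp t s ((e - 3*t)/4) := by
      rw [ff_mkV hg0 (Or.inr ⟨Nat.le_add_right _ _, by norm_num⟩)]
      simp only [lab, if_neg hnt, hsub]
      norm_num
    have hf1 : ff t s A (mkV t s (t + (e - 3*t)/4) 1) = Wb t s ((e - 3*t)/4) := by
      rw [ff_mkV hg0 (Or.inr ⟨Nat.le_add_right _ _, by norm_num⟩)]
      simp only [lab, if_neg hnt, hsub]
      norm_num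
    have hf2 : ff t s A (mkV t s (t + (e - 3*t)/4) 2) = Wq t s ((e - 3*t)/4) := by
      rw [ff_mkV hg0 (Or.inr ⟨Nat.le_add_right _ _, by norm_num⟩)]
      simp only [lab, if_neg hnt, hsub]
      norm_num
    rcases (by omega : (e - 3*t) % 4 = 0 ∨ (e - 3*t) % 4 = 1 ∨ (e - 3*t) % 4 = 2 ∨
        (e - 3*t) % 4 = 3) with h0 | h0 | h0 | h0 <;>
      simp only [EE, elb, if_neg (by omega : ¬ e < 3*t), h0] <;> norm_num <;>
      rw [edgeLabel, Sym2.lift_mk] <;>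
      simp only [ff_none, hf0, hf1, hf2] <;>
      simp only [Wp, Wq, Wb, Wc, Wd, Wu, Wcadd, WX] <;>
      split_ifs <;> omega

lemma mkV_ne_none {i j : ℕ} (hi : i < t + s) (hj : j < 2 ∨ (t ≤ i ∧ j < 3)) :
    mkV t s i j ≠ none := by
  rw [mkV, dif_pos ⟨hi, hj⟩]
  simp

lemma mkV_ne (hs : 1 ≤ s) (h1 : HA1 t hook A) (h3 : HA3 t A) {i j j' : ℕ} (hi : i < t + s)
    (hj : j < 2 ∨ (t ≤ i ∧ j < 3)) (hj' : j' < 2 ∨ (t ≤ i ∧ j' < 3)) (hjj : j ≠ j') :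
    mkV t s i j ≠ mkV t s i j' := by
  intro hEq
  have hffEq := congrArg (ff t s A) hEq
  rw [ff_mkV hi hj, ff_mkV hi hj'] at hffEq
  exact hjj (lab_inj hs h1 h3 _ _ _ _ hi hi hj hj' hffEq).2

lemma mkV_rel_none {i j : ℕ} (hi : i < t + s) (hj : j < 2 ∨ (t ≤ i ∧ j < 3))
    (hcond : j = 0 ∨ (j + 2 = if i < t then 3 else 4)) :
    windmillRel (WL t s) none (mkV t s i j) := by
  rw [mkV, dif_pos ⟨hi, hj⟩]
  show j = 0 ∨ j + 2 = (WL t s).get _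
  rw [WLget]
  exact hcond

lemma mkV_rel_succ {i j : ℕ} (hi : i < t + s) (hj : j < 2 ∨ (t ≤ i ∧ j < 3))
    (hj' : j + 1 < 2 ∨ (t ≤ i ∧ j + 1 < 3)) :
    windmillRel (WL t s) (mkV t s i j) (mkV t s i (j+1)) := by
  rw [mkV, dif_pos ⟨hi, hj⟩, mkV, dif_pos ⟨hi, hj'⟩]
  exact ⟨rfl, rfl⟩

lemma EE_mem (hs : 1 ≤ s) (h1 : HA1 t hook A) (h3 : HA3 t A) :
    ∀ e, e < 3*t + 4*s → EE t s e ∈ (Windmill (WL t s)).edgeSet := by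
  intro e he
  rw [Windmill]
  rcases Nat.lt_or_ge e (3*t) with h | h
  · have hd0 : e / 3 < t + s := by omega
    have hdt : e / 3 < t := by omega
    rcases (by omega : e % 3 = 0 ∨ e % 3 = 1 ∨ e % 3 = 2) with h0 | h0 | h0 <;>
      simp only [EE, if_pos h, h0] <;> norm_num
    · exact ⟨(mkV_ne_none hd0 (Or.inl (by norm_num))).symm,
        Or.inl (mkV_rel_none hd0 (Or.inl (by norm_num)) (Or.inl rfl))⟩
    · exact ⟨mkV_ne hs h1 h3 hd0 (Or.inl (by norm_num)) (Or.inl (by norm_num)) (by norm_num),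
        Or.inl (mkV_rel_succ hd0 (Or.inl (by norm_num)) (Or.inl (by norm_num)))⟩
    · exact ⟨(mkV_ne_none hd0 (Or.inl (by norm_num))).symm,
        Or.inl (mkV_rel_none hd0 (Or.inl (by norm_num)) (Or.inr (by rw [if_pos hdt])))⟩
  · have hg0 : (t + (e - 3*t)/4 < t + s) := by omega
    have hgj : ∀ jj : ℕ, jj < 3 → (jj < 2 ∨ (t ≤ t + (e - 3*t)/4 ∧ jj < 3)) := by
      intro jj hjj; exact Or.inr ⟨Nat.le_add_right _ _, hjj⟩
    have hnt : ¬ (t + (e - 3*t)/4 < t) := by omega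
    rcases (by omega : (e - 3*t) % 4 = 0 ∨ (e - 3*t) % 4 = 1 ∨ (e - 3*t) % 4 = 2 ∨
        (e - 3*t) % 4 = 3) with h0 | h0 | h0 | h0 <;>
      simp only [EE, if_neg (by omega : ¬ e < 3*t), h0] <;> norm_num
    · exact ⟨(mkV_ne_none hg0 (hgj 0 (by norm_num))).symm,
        Or.inl (mkV_rel_none hg0 (hgj 0 (by norm_num)) (Or.inl rfl))⟩
    · exact ⟨mkV_ne hs h1 h3 hg0 (hgj 0 (by norm_num)) (hgj 1 (by norm_num)) (by norm_num),
        Or.inl (mkV_rel_succ hg0 (hgj 0 (by norm_num)) (hgj 1 (by norm_num)))⟩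
    · exact ⟨mkV_ne hs h1 h3 hg0 (hgj 1 (by norm_num)) (hgj 2 (by norm_num)) (by norm_num),
        Or.inl (mkV_rel_succ hg0 (hgj 1 (by norm_num)) (hgj 2 (by norm_num)))⟩
    · exact ⟨(mkV_ne_none hg0 (hgj 2 (by norm_num))).symm,
        Or.inl (mkV_rel_none hg0 (hgj 2 (by norm_num)) (Or.inr (by rw [if_neg hnt])))⟩

lemma sigma_rel_elim {x y : Σ i : Fin (WL t s).length, Fin ((WL t s).get i - 1)}
    (h : windmillRel (WL t s) (some x) (some y)) :
    x.1.val = y.1.val ∧ y.2.val = x.2.val + 1 := h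

lemma none_rel_elim {x : Σ i : Fin (WL t s).length, Fin ((WL t s).get i - 1)}
    (h : windmillRel (WL t s) none (some x)) :
    x.2.val = 0 ∨ x.2.val + 2 = (if x.1.val < t then 3 else 4) := by
  rcases h with h | h
  · exact Or.inl h
  · right; rw [← WLget' x.1]; exact h

lemma center_edge_rep (hs : 1 ≤ s) (h1 : HA1 t hook A) (h3 : HA3 t A)
    (x : Σ i : Fin (WL t s).length, Fin ((WL t s).get i - 1))
    (hr : x.2.val = 0 ∨ x.2.val + 2 = (if x.1.val < t then 3 else 4)) :
    ∃ e, e < 3*t + 4*s ∧ EE t s e = s((none : WindmillVertex (WL t s)), some x) := by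
  obtain ⟨hx1, hx2⟩ := vert_facts x
  have FIN := ff_inj (t := t) (s := s) (hook := hook) (A := A) hs h1 h3
  by_cases hat : x.1.val < t
  · rcases (by omega : x.2.val = 0 ∨ x.2.val = 1) with h0 | h0
    · refine ⟨3 * x.1.val, by omega, ?_⟩
      have e0 : (3 * x.1.val) % 3 = 0 := by omega
      have e1 : (3 * x.1.val) / 3 = x.1.val := by omega
      simp only [EE, if_pos (show 3*x.1.val < 3*t by omega), e0, e1]
      norm_num
      left
      apply FIN
      rw [ff_mkV hx1 (Or.inl (by norm_num)), ff_some, h0]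
    · refine ⟨3 * x.1.val + 2, by omega, ?_⟩
      have e0 : (3 * x.1.val + 2) % 3 = 2 := by omega
      have e1 : (3 * x.1.val + 2) / 3 = x.1.val := by omega
      simp only [EE, if_pos (show 3*x.1.val + 2 < 3*t by omega), e0, e1]
      norm_num
      left
      apply FIN
      rw [ff_mkV hx1 (Or.inl (by norm_num)), ff_some, h0]
  · have hk : x.1.val - t < s := by omega
    have hT : t + (x.1.val - t) = x.1.val := by omega
    rw [if_neg hat] at hr
    rcases (by omega : x.2.val = 0 ∨ x.2.val = 2) with h0 | h0
    · refine ⟨3*t + 4*(x.1.val - t), by omega, ?_⟩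
      have e0 : (3*t + 4*(x.1.val - t) - 3*t) % 4 = 0 := by omega
      have e1 : (3*t + 4*(x.1.val - t) - 3*t) / 4 = x.1.val - t := by omega
      simp only [EE, if_neg (show ¬ 3*t + 4*(x.1.val - t) < 3*t by omega), e0, e1]
      norm_num
      left
      apply FIN
      rw [ff_mkV (by omega) (Or.inr ⟨Nat.le_add_right _ _, by norm_num⟩), ff_some, hT, h0]
    · refine ⟨3*t + 4*(x.1.val - t) + 3, by omega, ?_⟩
      have e0 : (3*t + 4*(x.1.val - t) + 3 - 3*t) % 4 = 3 := by omega
      have e1 : (3*t + 4*(x.1.val - t) + 3 - 3*t) / 4 = x.1.val - t := by omega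
      simp only [EE, if_neg (show ¬ 3*t + 4*(x.1.val - t) + 3 < 3*t by omega), e0, e1]
      norm_num
      left
      apply FIN
      rw [ff_mkV (by omega) (Or.inr ⟨Nat.le_add_right _ _, by norm_num⟩), ff_some, hT, h0]


lemma edge_rep (hs : 1 ≤ s) (h1 : HA1 t hook A) (h3 : HA3 t A) :
    ∀ ed ∈ (Windmill (WL t s)).edgeSet, ∃ e, e < 3*t + 4*s ∧ EE t s e = ed := by
  intro ed hed
  induction ed using Sym2.ind with
  | _ v w =>
    rw [SimpleGraph.mem_edgeSet, Windmill, SimpleGraph.fromRel_adj] at hed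
    obtain ⟨hne, hrel⟩ := hed
    have FIN := ff_inj (t := t) (s := s) (hook := hook) (A := A) hs h1 h3
    match v, w with
    | none, none => exact absurd rfl hne
    | some x, some y =>
      obtain ⟨hx1, hx2⟩ := vert_facts x
      obtain ⟨hy1, hy2⟩ := vert_facts y
      have key : ∀ (a b : Σ i : Fin (WL t s).length, Fin ((WL t s).get i - 1)),
          a.1.val < t + s → (a.2.val < 2 ∨ (t ≤ a.1.val ∧ a.2.val < 3)) →
          (b.2.val < 2 ∨ (t ≤ b.1.val ∧ b.2.val < 3)) →
          a.1.val = b.1.val → b.2.val = a.2.val + 1 →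
          ∃ e, e < 3*t + 4*s ∧ EE t s e = s(some a, some b) := by
        intro a b ha1 ha2 hb2 hI hJ
        by_cases hat : a.1.val < t
        · -- triangle path edge : a.2 = 0, b.2 = 1
          have ha0 : a.2.val = 0 := by omega
          refine ⟨3 * a.1.val + 1, by omega, ?_⟩
          have e0 : (3 * a.1.val + 1) % 3 = 1 := by omega
          have e1 : (3 * a.1.val + 1) / 3 = a.1.val := by omega
          simp only [EE, if_pos (show 3*a.1.val + 1 < 3*t by omega), e0, e1]
          norm_num
          have c0 : mkV t s a.1.val 0 = some a := by
            apply FIN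
            rw [ff_mkV ha1 (Or.inl (by norm_num)), ff_some, ha0]
          have c1 : mkV t s a.1.val 1 = some b := by
            apply FIN
            rw [ff_mkV ha1 (Or.inl (by norm_num)), ff_some, ← hI, hJ, ha0]
          rw [c0, c1]
          exact Or.inl ⟨rfl, rfl⟩
        · -- square path edge : (a.2,b.2) ∈ {(0,1),(1,2)}
          have hk : a.1.val - t < s := by omega
          have hT : t + (a.1.val - t) = a.1.val := by omega
          rcases (by omega : a.2.val = 0 ∨ a.2.val = 1) with ha0 | ha0
          · refine ⟨3*t + 4*(a.1.val - t) + 1, by omega, ?_⟩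
            have e0 : (3*t + 4*(a.1.val - t) + 1 - 3*t) % 4 = 1 := by omega
            have e1 : (3*t + 4*(a.1.val - t) + 1 - 3*t) / 4 = a.1.val - t := by omega
            simp only [EE, if_neg (show ¬ 3*t + 4*(a.1.val - t) + 1 < 3*t by omega), e0, e1]
            norm_num
            have c0 : mkV t s (t + (a.1.val - t)) 0 = some a := by
              apply FIN
              rw [ff_mkV (by omega) (Or.inr ⟨Nat.le_add_right _ _, by norm_num⟩), ff_some,
                hT, ha0]
            have c1 : mkV t s (t + (a.1.val - t)) 1 = some b := by
              apply FIN
              rw [ff_mkV (by omega) (Or.inr ⟨Nat.le_add_right _ _, by norm_num⟩), ff_some,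
                hT, ← hI, hJ, ha0]
            rw [c0, c1]
            exact Or.inl ⟨rfl, rfl⟩
          · refine ⟨3*t + 4*(a.1.val - t) + 2, by omega, ?_⟩
            have e0 : (3*t + 4*(a.1.val - t) + 2 - 3*t) % 4 = 2 := by omega
            have e1 : (3*t + 4*(a.1.val - t) + 2 - 3*t) / 4 = a.1.val - t := by omega
            simp only [EE, if_neg (show ¬ 3*t + 4*(a.1.val - t) + 2 < 3*t by omega), e0, e1]
            norm_num
            have c0 : mkV t s (t + (a.1.val - t)) 1 = some a := by
              apply FIN
              rw [ff_mkV (by omega) (Or.inr ⟨Nat.le_add_right _ _, by norm_num⟩), ff_some,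
                hT, ha0]
            have c1 : mkV t s (t + (a.1.val - t)) 2 = some b := by
              apply FIN
              rw [ff_mkV (by omega) (Or.inr ⟨Nat.le_add_right _ _, by norm_num⟩), ff_some,
                hT, ← hI, hJ, ha0]
            rw [c0, c1]
            exact Or.inl ⟨rfl, rfl⟩
      rcases hrel with hr | hr
      · obtain ⟨hI, hJ⟩ := sigma_rel_elim hr
        exact key x y hx1 hx2 hy2 hI hJ
      · obtain ⟨hI, hJ⟩ := sigma_rel_elim hr
        obtain ⟨e, he, hEe⟩ := key y x hy1 hy2 hx2 hI hJ
        exact ⟨e, he, by rw [hEe, Sym2.eq_swap]⟩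
    | none, some x =>
      have hr : x.2.val = 0 ∨ x.2.val + 2 = (if x.1.val < t then 3 else 4) := by
        rcases hrel with h | h
        · exact none_rel_elim h
        · exact absurd h (by intro hh; exact hh)
      exact center_edge_rep hs h1 h3 x hr
    | some x, none =>
      have hr : x.2.val = 0 ∨ x.2.val + 2 = (if x.1.val < t then 3 else 4) := by
        rcases hrel with h | h
        · exact absurd h (by intro hh; exact hh)
        · exact none_rel_elim h
      obtain ⟨e, he, hEe⟩ := center_edge_rep hs h1 h3 x hr
      exact ⟨e, he, by rw [hEe, Sym2.eq_swap]⟩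

lemma master (ht : 1 ≤ t) (hs : 1 ≤ s) (hhook : hook ≤ 1) (h1 : HA1 t hook A)
    (h2 : hook = 1 → HA2 t A) (h3 : HA3 t A) :
    ∃ f : WindmillVertex (WL t s) → ℕ,
      Function.Injective f ∧ (∀ v, f v ≤ 3*t + 4*s + hook) ∧
      Set.BijOn (edgeLabel f) (Windmill (WL t s)).edgeSet
        (Set.Icc 1 (3*t + 4*s - 1) ∪ {3*t + 4*s + hook}) := by
  refine ⟨ff t s A, ff_inj hs h1 h3, ff_bound hs h1, ?_, ?_, ?_⟩
  · -- MapsTo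
    intro ed hed
    obtain ⟨e, he, hEe⟩ := edge_rep hs h1 h3 ed hed
    rw [← hEe, EE_label ht hs e he]
    obtain ⟨hl, hr⟩ := elb_bounds' ht hs hhook h1 h2 e he
    rcases hr with hr | hr
    · exact Or.inl (Set.mem_Icc.2 ⟨hl, hr⟩)
    · exact Or.inr (by simp [hr])
  · -- InjOn
    intro ed1 hed1 ed2 hed2 heq
    obtain ⟨e1, he1, hEe1⟩ := edge_rep hs h1 h3 ed1 hed1
    obtain ⟨e2, he2, hEe2⟩ := edge_rep hs h1 h3 ed2 hed2
    rw [← hEe1, ← hEe2, EE_label ht hs e1 he1, EE_label ht hs e2 he2] at heq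
    rw [← hEe1, ← hEe2, elb_inj ht hs h1 h3 e1 e2 he1 he2 heq]
  · -- SurjOn
    intro y hy
    have himg : (Finset.range (3*t + 4*s)).image (elb t s A) =
        Finset.Icc 1 (3*t + 4*s - 1) ∪ {3*t + 4*s + hook} := by
      apply Finset.eq_of_subset_of_card_le
      · intro z hz
        obtain ⟨e, he, rfl⟩ := Finset.mem_image.1 hz
        have he' := Finset.mem_range.1 he
        obtain ⟨hl, hr⟩ := elb_bounds' ht hs hhook h1 h2 e he'
        rcases hr with hr | hr
        · exact Finset.mem_union_left _ (Finset.mem_Icc.2 ⟨hl, hr⟩)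
        · exact Finset.mem_union_right _ (by simp [hr])
      · have hcard1 : (Finset.Icc 1 (3*t + 4*s - 1) ∪ {3*t + 4*s + hook}).card =
            3*t + 4*s := by
          rw [Finset.card_union_of_disjoint (by
            simp only [Finset.disjoint_singleton_right, Finset.mem_Icc]
            omega)]
          simp [Nat.card_Icc]
          omega
        have hcard2 : ((Finset.range (3*t + 4*s)).image (elb t s A)).card = 3*t + 4*s := by
          rw [Finset.card_image_of_injOn, Finset.card_range]
          intro a ha b hb hab
          exact elb_inj ht hs h1 h3 a b (Finset.mem_range.1 ha) (Finset.mem_range.1 hb) hab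
        omega
    have hy' : y ∈ Finset.Icc 1 (3*t + 4*s - 1) ∪ {3*t + 4*s + hook} := by
      rcases hy with hy | hy
      · exact Finset.mem_union_left _ (Finset.mem_Icc.2 (Set.mem_Icc.1 hy))
      · exact Finset.mem_union_right _ (by simpa using hy)
    rw [← himg] at hy'
    obtain ⟨e, he, helb⟩ := Finset.mem_image.1 hy'
    have he' := Finset.mem_range.1 he
    exact ⟨EE t s e, EE_mem hs h1 h3 e he', by rw [EE_label ht hs e he', helb]⟩
end
end WindGrace

def skx (t d : ℕ) : ℕ :=
  if t % 4 = 0 then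
    (if d % 2 = 1 then
      (if d + 1 ≤ 2*(t/4) then 6*(t/4) - (d-1)/2
       else if d = 4*(t/4) - 1 then t/4 + 1
       else t/4 - (d - (2*(t/4)+1))/2)
     else
      (if d + 2 ≤ 2*(t/4) then 2*(t/4) - (d-2)/2
       else if d = 2*(t/4) then 1
       else 5*(t/4) - 1 - (d - (2*(t/4)+2))/2))
  else if t % 4 = 1 then
    (if t = 1 then 1 else
     if d % 2 = 1 then
      (if d ≤ 2*(t/4) - 1 then 2*(t/4) - (d-1)/2
       else if d = 2*(t/4) + 1 then 6*(t/4) + 1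
       else 5*(t/4) - 1 - (d - (2*(t/4)+3))/2)
     else
      (if d ≤ 2*(t/4) then 6*(t/4) - (d-2)/2
       else if d = 4*(t/4) then t/4
       else t/4 - 1 - (d - (2*(t/4)+2))/2))
  else if t % 4 = 2 then
    (if t = 2 then (if d = 1 then 1 else 3) else
     if d % 2 = 1 then
      (if d ≤ 2*(t/4) + 1 then 2*(t/4) + 1 - (d-1)/2
       else if d = 4*(t/4) + 1 then 3*(t/4) + 3
       else 5*(t/4) + 2 - (d - (2*(t/4)+3))/2)
     else
      (if d ≤ 2*(t/4) then 6*(t/4) + 2 - (d-2)/2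
       else if d = 2*(t/4) + 2 then 6*(t/4) + 3
       else t/4 - (d - (2*(t/4)+4))/2))
  else
    (if d % 2 = 1 then
      (if d ≤ 2*(t/4) + 1 then 2*(t/4) + 2 - (d-1)/2
       else if d = 4*(t/4) + 3 then t/4 + 1
       else 5*(t/4) + 3 - (d - (2*(t/4)+3))/2)
     else
      (if d ≤ 2*(t/4) then 6*(t/4) + 4 - (d-2)/2
       else if d = 2*(t/4) + 2 then 6*(t/4) + 5
       else t/4 - (d - (2*(t/4)+4))/2))

lemma skx_bounds (t : ℕ) (ht : 1 ≤ t) (i : ℕ) (h1 : 1 ≤ i) (h2 : i ≤ t) :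
    1 ≤ skx t i ∧ skx t i + i ≤ 2*t + (if t % 4 ≤ 1 then 0 else 1) := by
  simp only [skx]; split_ifs <;> omega

lemma skx_hook (t : ℕ) (ht : 1 ≤ t) (hr : 2 ≤ t % 4) (i : ℕ) (h1 : 1 ≤ i) (h2 : i ≤ t) :
    skx t i ≠ 2*t ∧ skx t i + i ≠ 2*t := by
  simp only [skx]; split_ifs <;> omega

lemma skx_inj (t : ℕ) (ht : 1 ≤ t) : ∀ i j e f, 1 ≤ i → i ≤ t → 1 ≤ j → j ≤ t →
    e ≤ 1 → f ≤ 1 → skx t i + e*i = skx t j + f*j → i = j ∧ e = f := by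
  intro i j e f hi1 hi2 hj1 hj2 he hf heq
  interval_cases e <;> interval_cases f <;>
    (simp only [skx] at heq; split_ifs at heq <;> omega)

/-- `f` is a graceful labelling of the graph `G` with `m` edges: `f` is an injective map
into `{0, …, m}` and the induced edge labelling is a bijection onto `{1, …, m}`. -/
def IsGracefulLabelling {V : Type*} (G : SimpleGraph V) (m : ℕ) (f : V → ℕ) : Prop :=
  Function.Injective f ∧ (∀ v, f v ≤ m) ∧
    Set.BijOn (edgeLabel f) G.edgeSet (Set.Icc 1 m)

/-- The graph `G`, with `m` edges, is graceful. -/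
def IsGraceful {V : Type*} (G : SimpleGraph V) (m : ℕ) : Prop :=
  ∃ f, IsGracefulLabelling G m f

/-- `f` is a near graceful labelling of the graph `G` with `m` edges: `f` is an injective
map into `{0, …, m+1}` and the induced edge labelling is a bijection onto either
`{1, …, m}` or `{1, …, m-1, m+1}`. -/
def IsNearGracefulLabelling {V : Type*} (G : SimpleGraph V) (m : ℕ) (f : V → ℕ) : Prop :=
  Function.Injective f ∧ (∀ v, f v ≤ m + 1) ∧
    (Set.BijOn (edgeLabel f) G.edgeSet (Set.Icc 1 m) ∨
      Set.BijOn (edgeLabel f) G.edgeSet (Set.Icc 1 (m - 1) ∪ {m + 1}))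

/-- The graph `G`, with `m` edges, is near graceful. -/
def IsNearGraceful {V : Type*} (G : SimpleGraph V) (m : ℕ) : Prop :=
  ∃ f, IsNearGracefulLabelling G m f


/-- For all integers `s ≥ 1` and `t ≥ 1`, the variable windmill `C₃ᵗC₄ˢ` (which has
`3t + 4s` edges) is graceful when `t ≡ 0, 1 (mod 4)` and near graceful when
`t ≡ 2, 3 (mod 4)`. -/
theorem C3C4_windmill_graceful (t s : ℕ) (ht : 1 ≤ t) (hs : 1 ≤ s) :
    ((t % 4 = 0 ∨ t % 4 = 1) →
      IsGraceful (Windmill (List.replicate t 3 ++ List.replicate s 4)) (3 * t + 4 * s)) ∧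
    ((t % 4 = 2 ∨ t % 4 = 3) →
      IsNearGraceful (Windmill (List.replicate t 3 ++ List.replicate s 4)) (3 * t + 4 * s)) := by
  constructor
  · intro hres
    have hhk : t % 4 ≤ 1 := by omega
    have h1 : WindGrace.HA1 t 0 (skx t) := by
      intro i hi1 hi2
      have := skx_bounds t ht i hi1 hi2
      rw [if_pos hhk] at this
      exact this
    have h2 : (0 : ℕ) = 1 → WindGrace.HA2 t (skx t) := by intro h; exact absurd h (by norm_num)
    have h3 : WindGrace.HA3 t (skx t) := skx_inj t ht
    obtain ⟨f, hinj, hbd, hbij⟩ :=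
      WindGrace.master (t := t) (s := s) (hook := 0) ht hs (by norm_num) h1 h2 h3
    refine ⟨f, hinj, fun v => by simpa using hbd v, ?_⟩
    have hset : Set.Icc 1 (3*t + 4*s - 1) ∪ {3*t + 4*s + 0} = Set.Icc 1 (3 * t + 4 * s) := by
      ext x
      simp only [Set.mem_union, Set.mem_Icc, Set.mem_singleton_iff]
      omega
    rw [hset] at hbij
    exact hbij
  · intro hres
    have hhk : ¬ (t % 4 ≤ 1) := by omega
    have h1 : WindGrace.HA1 t 1 (skx t) := by
      intro i hi1 hi2
      have := skx_bounds t ht i hi1 hi2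
      rw [if_neg hhk] at this
      exact this
    have h2 : (1 : ℕ) = 1 → WindGrace.HA2 t (skx t) := by
      intro _
      exact skx_hook t ht (by omega)
    have h3 : WindGrace.HA3 t (skx t) := skx_inj t ht
    obtain ⟨f, hinj, hbd, hbij⟩ :=
      WindGrace.master (t := t) (s := s) (hook := 1) ht hs (by norm_num) h1 h2 h3
    exact ⟨f, hinj, fun v => hbd v, Or.inr hbij⟩
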